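/- Every commutative two-dimensional Itô *-algebra 𝔞 (with death element d) is, as a *-algebra, isomorphic either to the Wiener algebra (second-order nilpotent: a b ∈ ℂ d and a b c = 0 for all a,b,c, with a⋆ a = |ξ|² d for a parametrized by (α, ξ)) or to the Poisson algebra (ℂ d ⊕ ℂ c with c⋆ = c, c² = c + d up to normalization, equivalently containing a self-adjoint idempotent-like element modulo d); in particular, a two-dimensional commutative *-algebra spanned by d (with d·x = 0 = x·d for all x and d⋆ = d) and one additional generator b with b⋆b ∈ span(d, b) is isomorphic to one of these two types according to whether b⋆b ∈ ℂd or not. -/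
import Mathlib


open ComplexOrder

/-- every commutative two-dimensional Itô *-algebra
`𝔞 = ℂd ⊕ ℂb` — a commutative complex *-algebra with a central death element
`d` (`d⋆ = d`, `d·x = 0 = x·d`), spanned by `d` and one additional generator
`b`, carrying a positive linear functional `l` with `l(d) = 1` — is of
Wiener/Newton or of Poisson type: the generator can be renormalized to a
self-adjoint `b' = αd + βb` (`β ≠ 0`) with either `b'² = λd`, `λ ≥ 0`
(Wiener type, second-order nilpotent since products land in `ℂd` which is
annihilating) or `b'² = b' + λd` (Poisson type); the first case occurs
exactly when `b⋆b ∈ ℂd`. -/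
theorem two_dim_commutative_ito_algebra_classification
    {A : Type*} [NonUnitalRing A] [Module ℂ A] [StarRing A] [StarModule ℂ A]
    [SMulCommClass ℂ A A] [IsScalarTower ℂ A A]
    (d b : A)
    (hcomm : ∀ x y : A, x * y = y * x)
    (hdstar : star d = d)
    (hdzero : ∀ x : A, d * x = 0 ∧ x * d = 0)
    (hspan : ∀ x : A, ∃ α β : ℂ, x = α • d + β • b)
    (hd0 : d ≠ 0)
    (hindep : ∀ α : ℂ, b ≠ α • d)
    (l : A →ₗ[ℂ] ℂ) (hld : l d = 1)
    (hlpos : ∀ a : A, 0 ≤ l (star a * a)) :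
    ∃ α β : ℂ, β ≠ 0 ∧ star (α • d + β • b) = α • d + β • b ∧
      (((∃ lam : ℝ, 0 ≤ lam ∧
          (α • d + β • b) * (α • d + β • b) = (lam : ℂ) • d) ∧
          ∃ μ : ℂ, star b * b = μ • d) ∨
        ((∃ lam : ℂ,
          (α • d + β • b) * (α • d + β • b) = (α • d + β • b) + lam • d) ∧
          ∀ μ : ℂ, star b * b ≠ μ • d)) := by
  have h1 : ∀ (c : ℂ) (z : A), (c • d) * z = 0 := fun c z => by
    rw [smul_mul_assoc, (hdzero z).1, smul_zero]
  have h2 : ∀ (c : ℂ) (z : A), z * (c • d) = 0 := fun c z => by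
    rw [mul_smul_comm, (hdzero z).2, smul_zero]
  have hmul : ∀ x y : ℂ, (x • d + y • b) * (x • d + y • b) = (y * y) • (b * b) := by
    intro x y
    simp only [add_mul, mul_add, h1, h2, zero_add, add_zero, smul_mul_smul_comm]
  have hscal : ∀ c : ℂ, c • d = 0 → c = 0 := by
    intro c hc
    by_contra h
    exact hd0 (by rw [← one_smul ℂ d, ← inv_mul_cancel₀ h, mul_smul, hc, smul_zero])
  have hind : ∀ x y x' y' : ℂ, x • d + y • b = x' • d + y' • b → x = x' ∧ y = y' := by
    intro x y x' y' h
    have hy : y = y' := by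
      by_contra hne
      apply hindep ((y - y')⁻¹ * (x' - x))
      have hb : (y - y') • b = (x' - x) • d := by
        have h0 : (y - y') • b - (x' - x) • d = (x • d + y • b) - (x' • d + y' • b) := by
          module
        rw [h, sub_self] at h0
        exact sub_eq_zero.mp h0
      calc b = ((y - y')⁻¹ * (y - y')) • b := by
              rw [inv_mul_cancel₀ (sub_ne_zero.mpr hne), one_smul]
        _ = (y - y')⁻¹ • ((y - y') • b) := mul_smul _ _ _
        _ = (y - y')⁻¹ • ((x' - x) • d) := by rw [hb]
        _ = ((y - y')⁻¹ * (x' - x)) • d := (mul_smul _ _ _).symm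
    subst hy
    refine ⟨?_, rfl⟩
    have hx : (x - x') • d = 0 := by
      rw [sub_smul, sub_eq_zero]
      exact add_right_cancel h
    exact sub_eq_zero.mp (hscal _ hx)
  obtain ⟨γ, δ, hsb⟩ := hspan (star b)
  obtain ⟨p, q, hbb⟩ := hspan (b * b)
  have hstar : ∀ x y : ℂ, star (x • d + y • b) =
      (star x + star y * γ) • d + (star y * δ) • b := by
    intro x y
    rw [star_add, star_smul, star_smul, hdstar, hsb, smul_add, smul_smul, smul_smul,
      ← add_assoc, ← add_smul]
  -- relations from star (star b) = b
  have e1 : (star γ + star δ * γ) • d + (star δ * δ) • b = (0:ℂ) • d + (1:ℂ) • b := by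
    rw [zero_smul, one_smul, zero_add, ← hstar, ← hsb, star_star]
  obtain ⟨hγ, hδ⟩ := hind _ _ _ _ e1
  have hδ0 : δ ≠ 0 := by
    intro h; rw [h, mul_zero] at hδ; exact zero_ne_one hδ
  -- relation from star (b * b) = star b * star b
  have e2 : (star p + star q * γ) • d + (star q * δ) • b
      = (δ * δ * p) • d + (δ * δ * q) • b := by
    calc (star p + star q * γ) • d + (star q * δ) • b
        = star (p • d + q • b) := (hstar p q).symm
      _ = star (b * b) := by rw [hbb]
      _ = star b * star b := star_mul b b
      _ = (δ * δ) • (b * b) := by rw [hsb]; exact hmul γ δ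
      _ = (δ * δ * p) • d + (δ * δ * q) • b := by
          rw [hbb, smul_add, smul_smul, smul_smul]
  have hq' : star q = δ * q := mul_right_cancel₀ hδ0 (by rw [(hind _ _ _ _ e2).2]; ring)
  have hsbb : star b * b = (δ * p) • d + (δ * q) • b := by
    rw [hsb, add_mul, h1, zero_add, smul_mul_assoc, hbb, smul_add, smul_smul, smul_smul]
  -- the self-adjointness key lemma
  have key : ∀ β : ℂ, star β * δ = β →
      star (star β * γ / 2) + star β * γ = star β * γ / 2 := by
    intro β hβδ
    have h2' : β * star δ = star β := by
      have := congrArg star hβδ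
      rwa [star_mul', star_star] at this
    have hsγ : star (star β * γ / 2) = β * star γ / 2 := by
      simp [Complex.star_def, map_div₀, map_mul]
    have hγ' : star γ = -(star δ * γ) := by linear_combination hγ
    rw [hsγ, hγ']
    linear_combination (-(γ / 2)) * h2'
  by_cases hq0 : q = 0
  · -- Wiener case
    obtain ⟨β, hβ⟩ := IsAlgClosed.exists_pow_nat_eq δ (n := 2) zero_lt_two
    have hβ0 : β ≠ 0 := by
      intro h; apply hδ0; rw [← hβ, h]; ring
    have hnδ : Complex.normSq δ = 1 := by
      have : ((Complex.normSq δ : ℂ)) = 1 := by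
        rw [← Complex.mul_conj δ, ← Complex.star_def]
        linear_combination hδ
      exact_mod_cast this
    have hnβ : Complex.normSq β = 1 := by
      have hsq : Complex.normSq β ^ 2 = 1 := by
        rw [← map_pow, hβ, hnδ]
      have hnn := Complex.normSq_nonneg β
      have hfac : (Complex.normSq β - 1) * (Complex.normSq β + 1) = 0 := by
        linear_combination hsq
      rcases mul_eq_zero.mp hfac with h | h
      · linarith
      · linarith
    have hββ : star β * β = 1 := by
      rw [Complex.star_def, mul_comm, Complex.mul_conj, hnβ]; norm_num
    have hβδ : star β * δ = β := by
      rw [← hβ]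
      calc star β * β ^ 2 = (star β * β) * β := by ring
        _ = β := by rw [hββ, one_mul]
    refine ⟨star β * γ / 2, β, hβ0, ?_, Or.inl ⟨⟨(δ * p).re, ?_, ?_⟩, δ * p, ?_⟩⟩
    · rw [hstar, key β hβδ, hβδ]
    · -- positivity
      have hpos := hlpos b
      rw [hsbb, hq0, mul_zero, zero_smul, add_zero, map_smul, hld, smul_eq_mul,
        mul_one] at hpos
      exact (Complex.nonneg_iff.mp hpos).1
    · have hpos := hlpos b
      rw [hsbb, hq0, mul_zero, zero_smul, add_zero, map_smul, hld, smul_eq_mul,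
        mul_one] at hpos
      have him : (δ * p).im = 0 := ((Complex.nonneg_iff.mp hpos).2).symm
      have hre : ((δ * p).re : ℂ) = δ * p := by
        exact Complex.ext (by simp) (by simp [him])
      rw [hmul, hbb, hq0, zero_smul, add_zero, smul_smul, hre]
      congr 1
      rw [← hβ]; ring
    · rw [hsbb, hq0, mul_zero, zero_smul, add_zero]
  · -- Poisson case
    set β : ℂ := q⁻¹ with hβdef
    have hβ0 : β ≠ 0 := inv_ne_zero hq0
    have hβδ : star β * δ = β := by
      rw [hβdef, Complex.star_def, map_inv₀, ← Complex.star_def, hq']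
      field_simp
    refine ⟨star β * γ / 2, β, hβ0, ?_, Or.inr ⟨⟨β * β * p - star β * γ / 2, ?_⟩, ?_⟩⟩
    · rw [hstar, key β hβδ, hβδ]
    · have hsq : β * β * q = β := by
        rw [hβdef]; field_simp
      rw [hmul, hbb, smul_add, smul_smul, smul_smul, hsq]
      module
    · intro μ hμ
      rw [hsbb] at hμ
      have : (δ * p) • d + (δ * q) • b = μ • d + (0:ℂ) • b := by
        rw [zero_smul, add_zero]; exact hμ
      have h0 := (hind _ _ _ _ this).2
      rcases mul_eq_zero.mp h0 with h | h
      · exact hδ0 h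
      · exact hq0 h
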